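/- Let H be a Hopf algebra over a field k with bijective antipode S and τ a Hopf algebra automorphism of H of finite order r, and let K be a field extension of k. Then the twisted exponent of the base-changed Hopf algebra H ⊗_k K with respect to the automorphism τ ⊗ Id_K equals exp_τ(H). -/

import Mathlib

open scoped TensorProduct

noncomputable section

namespace TwistedExponent

variable (k H : Type*) [CommRing k] [Ring H] [HopfAlgebra k H]

/-- The convolution product of two linear endomorphisms of a bialgebra:
`f * g = μ ∘ (f ⊗ g) ∘ Δ`. -/
def conv (f g : H →ₗ[k] H) : H →ₗ[k] H :=
  LinearMap.mul' k H ∘ₗ TensorProduct.map f g ∘ₗ Coalgebra.comul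

/-- The convolution unit `η ∘ ε`, i.e. `h ↦ ε(h)·1`. -/
def convOne : H →ₗ[k] H := Algebra.linearMap k H ∘ₗ Coalgebra.counit

/-- `gamma T m` is the map `Γ_m = μ^m ∘ (Id ⊗ T ⊗ T² ⊗ ⋯ ⊗ T^{m-1}) ∘ Δ^{m-1}`, expressed as
the convolution product `Id * T * T² * ⋯ * T^{m-1}` (with `gamma T 0` the convolution unit). -/
def gamma (T : H →ₗ[k] H) : ℕ → (H →ₗ[k] H)
  | 0 => convOne k H
  | (m + 1) => conv k H (gamma T m) (T ^ m)

/-- The inverse of the antipode, given that the antipode is bijective. -/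
def antipodeInv (hS : Function.Bijective (HopfAlgebra.antipode (R := k) (A := H))) :
    H →ₗ[k] H :=
  (LinearEquiv.ofBijective (HopfAlgebra.antipode (R := k) (A := H)) hS).symm

/-- The map `S⁻² ∘ τ`. -/
def twist (hS : Function.Bijective (HopfAlgebra.antipode (R := k) (A := H)))
    (τ : H →ₗ[k] H) : H →ₗ[k] H :=
  antipodeInv k H hS ∘ₗ antipodeInv k H hS ∘ₗ τ

/-- `f : H → H` has exact (finite) order `r`. -/
def HasOrder (τ : H → H) (r : ℕ) : Prop :=
  0 < r ∧ τ^[r] = id ∧ ∀ s : ℕ, 0 < s → s < r → τ^[s] ≠ id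

end TwistedExponent

namespace TwistedExponent

section TensorIota

variable {k K H H' : Type*} [Field k] [Field K] [Algebra k K]
  [AddCommGroup H] [Module k H] [AddCommGroup H'] [Module k H']
  [Module K H'] [IsScalarTower k K H']

/-- The canonical `k`-linear map `H ⊗[k] H → H' ⊗[K] H'` induced by `ι : H → H'`. -/
def tensorIota (ι : H →ₗ[k] H') :
    H ⊗[k] H →ₗ[k] (H' ⊗[K] H') :=
  TensorProduct.lift <| LinearMap.mk₂ k (fun x y => ι x ⊗ₜ[K] ι y)
    (fun x₁ x₂ y => by simp [TensorProduct.add_tmul])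
    (fun a x y => by simp [TensorProduct.smul_tmul'])
    (fun x y₁ y₂ => by simp [TensorProduct.tmul_add])
    (fun a x y => by simp [← TensorProduct.smul_tmul', TensorProduct.smul_tmul])

end TensorIota

end TwistedExponent


namespace TwistedExponent
section TensorIota
variable {k K H H' : Type*} [Field k] [Field K] [Algebra k K]
  [AddCommGroup H] [Module k H] [AddCommGroup H'] [Module k H']
  [Module K H'] [IsScalarTower k K H']

@[simp] lemma tensorIota_tmul (ι : H →ₗ[k] H') (x y : H) :
    tensorIota (K := K) ι (x ⊗ₜ[k] y) = ι x ⊗ₜ[K] ι y := rfl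
end TensorIota

section Aux
variable {k : Type*} (K : Type*) {H' : Type*} [Field k] [Field K] [Algebra k K]
  [Ring H'] [Algebra K H'] [Module k H'] [IsScalarTower k K H']
include K

lemma ksmul_mul (c : k) (a b : H') : (c • a) * b = c • (a * b) := by
  rw [← algebraMap_smul K c a, smul_mul_assoc, algebraMap_smul]

lemma mul_ksmul (c : k) (a b : H') : a * (c • b) = c • (a * b) := by
  rw [← algebraMap_smul K c b, mul_smul_comm, algebraMap_smul]

/-- multiply two tensor factors, k-linearly -/
def mulk : H' ⊗[k] H' →ₗ[k] H' :=
  TensorProduct.lift <| LinearMap.mk₂ k (fun a b => a * b)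
    (fun a b c => add_mul a b c) (fun c a b => ksmul_mul K c a b)
    (fun a b c => mul_add a b c) (fun c a b => mul_ksmul K c a b)

@[simp] lemma mulk_tmul (a b : H') : mulk (k := k) K (a ⊗ₜ[k] b) = a * b := rfl

/-- multiply three tensor factors, k-linearly -/
def mul3k : H' ⊗[k] (H' ⊗[k] H') →ₗ[k] H' :=
  TensorProduct.lift <| LinearMap.mk₂ k (fun a w => a * mulk K w)
    (fun a b w => add_mul a b _) (fun c a w => ksmul_mul K c a _)
    (fun a w₁ w₂ => by beta_reduce; rw [map_add, mul_add]) (fun c a w => by beta_reduce; rw [map_smul, mul_ksmul K])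

@[simp] lemma mul3k_tmul (a b c : H') :
    mul3k (k := k) K (a ⊗ₜ[k] (b ⊗ₜ[k] c)) = a * (b * c) := rfl
end Aux

section Hopf
variable {k K H H' : Type*} [Field k] [Field K] [Algebra k K]
  [Ring H] [HopfAlgebra k H] [Ring H'] [HopfAlgebra K H']
  [Module k H'] [IsScalarTower k K H']
  (ι : H →ₗ[k] H')

lemma key1
    (hcounit : ∀ h : H, Coalgebra.counit (R := K) (ι h) =
      algebraMap k K (Coalgebra.counit (R := k) h))
    (hcomul : ∀ h : H, Coalgebra.comul (R := K) (ι h) =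
      tensorIota (K := K) ι (Coalgebra.comul (R := k) h))
    {ι₀ : Type*} (x : H) (rx : Coalgebra.Repr k x ι₀) :
    ∑ j ∈ rx.index, ι (rx.left j) * HopfAlgebra.antipode (R := K) (ι (rx.right j)) =
      Coalgebra.counit (R := k) x • (1 : H') := by
  have h1 := HopfAlgebra.mul_antipode_lTensor_comul_apply (R := K) (A := H') (ι x)
  rw [hcomul x, ← rx.eq, hcounit x] at h1
  simp only [map_sum, tensorIota_tmul, LinearMap.lTensor_tmul,
    LinearMap.mul'_apply] at h1
  rw [h1, Algebra.algebraMap_eq_smul_one, algebraMap_smul]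

lemma antipode_comm
    (hmul : ∀ x y : H, ι (x * y) = ι x * ι y) (hone : ι 1 = 1)
    (hcounit : ∀ h : H, Coalgebra.counit (R := K) (ι h) =
      algebraMap k K (Coalgebra.counit (R := k) h))
    (hcomul : ∀ h : H, Coalgebra.comul (R := K) (ι h) =
      tensorIota (K := K) ι (Coalgebra.comul (R := k) h))
    (h : H) :
    HopfAlgebra.antipode (R := K) (ι h) = ι (HopfAlgebra.antipode (R := k) h) := by
  classical
  set S : H →ₗ[k] H := HopfAlgebra.antipode (R := k) with hS
  set S' : H' →ₗ[K] H' := HopfAlgebra.antipode (R := K) with hS'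
  set r : Coalgebra.Repr k h (H × H) := Coalgebra.Repr.arbitrary k h with hrr
  set a1 : ∀ i : H × H, Coalgebra.Repr k (r.left i) (H × H) :=
    fun i => Coalgebra.Repr.arbitrary k (r.left i) with ha1
  set a2 : ∀ i : H × H, Coalgebra.Repr k (r.right i) (H × H) :=
    fun i => Coalgebra.Repr.arbitrary k (r.right i) with ha2
  have hL : ∑ i ∈ r.index, Coalgebra.counit (R := k) (r.left i) • r.right i = h := by
    have h0 := congrArg (TensorProduct.lid k H) (Coalgebra.sum_counit_tmul_eq (R := k) r)
    simp only [map_sum, TensorProduct.lid_tmul, one_smul] at h0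
    exact h0
  have hR : ∑ i ∈ r.index, Coalgebra.counit (R := k) (r.right i) • r.left i = h := by
    have h0 := congrArg (TensorProduct.rid k H) (Coalgebra.sum_tmul_counit_eq (R := k) r)
    simp only [map_sum, TensorProduct.rid_tmul, one_smul] at h0
    exact h0
  have E := Coalgebra.sum_map_tmul_tmul_eq (R := k) (B := H')
      (ι ∘ₗ S) ι (S'.restrictScalars k ∘ₗ ι) h (repr := r) (a₁ := a1) (a₂ := a2)
  have E' := congrArg (mul3k (k := k) K (H' := H')) E
  simp only [map_sum, mul3k_tmul, LinearMap.comp_apply, LinearMap.restrictScalars_apply] at E'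
  calc S' (ι h)
      = ∑ i ∈ r.index, Coalgebra.counit (R := k) (r.left i) • S' (ι (r.right i)) := by
        have h0 := congrArg (fun x => S' (ι x)) hL
        simp only [map_sum, map_smul, LinearMap.map_smul_of_tower] at h0
        exact h0.symm
    _ = ∑ i ∈ r.index, (Coalgebra.counit (R := k) (r.left i) • (1 : H')) *
          S' (ι (r.right i)) := by
        simp [ksmul_mul K]
    _ = ∑ i ∈ r.index,
          (∑ j ∈ (a1 i).index, ι (S ((a1 i).left j) * (a1 i).right j)) *
            S' (ι (r.right i)) := by
        refine Finset.sum_congr rfl fun i _ => ?_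
        rw [← map_sum ι, HopfAlgebra.sum_antipode_mul_eq_smul (a1 i), map_smul, hone]
    _ = ∑ i ∈ r.index, ∑ j ∈ (a1 i).index,
          ι (S ((a1 i).left j)) * (ι ((a1 i).right j) * S' (ι (r.right i))) := by
        simp [hmul, Finset.sum_mul, mul_assoc]
    _ = ∑ i ∈ r.index, ∑ j ∈ (a2 i).index,
          ι (S (r.left i)) * (ι ((a2 i).left j) * S' (ι ((a2 i).right j))) := E'.symm
    _ = ∑ i ∈ r.index,
          ι (S (r.left i)) * (Coalgebra.counit (R := k) (r.right i) • (1 : H')) := by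
        refine Finset.sum_congr rfl fun i _ => ?_
        rw [← Finset.mul_sum, key1 ι hcounit hcomul (r.right i) (a2 i)]
    _ = ∑ i ∈ r.index, Coalgebra.counit (R := k) (r.right i) • ι (S (r.left i)) := by
        simp [mul_ksmul K]
    _ = ι (S h) := by
        have h0 := congrArg (fun x => ι (S x)) hR
        simp only [map_sum, map_smul] at h0
        exact h0

end Hopf

section Comm
open Coalgebra
variable {k K H H' : Type*} [Field k] [Field K] [Algebra k K]
  [Ring H] [HopfAlgebra k H] [Ring H'] [HopfAlgebra K H']
  [Module k H'] [IsScalarTower k K H']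
  (hS : Function.Bijective (HopfAlgebra.antipode (R := k) (A := H)))
  (hS' : Function.Bijective (HopfAlgebra.antipode (R := K) (A := H')))
  (ι : H →ₗ[k] H')
  (hmul : ∀ x y : H, ι (x * y) = ι x * ι y) (hone : ι 1 = 1)
  (hcounit : ∀ h : H, Coalgebra.counit (R := K) (ι h) =
    algebraMap k K (Coalgebra.counit (R := k) h))
  (hcomul : ∀ h : H, Coalgebra.comul (R := K) (ι h) =
    tensorIota (K := K) ι (Coalgebra.comul (R := k) h))

include hS hS' hmul hone hcounit hcomul

lemma antipodeInv_comm (h : H) :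
    antipodeInv K H' hS' (ι h) = ι (antipodeInv k H hS h) := by
  have h1 := antipode_comm ι hmul hone hcounit hcomul (antipodeInv k H hS h)
  have h2 : HopfAlgebra.antipode (R := k) (antipodeInv k H hS h) = h :=
    (LinearEquiv.ofBijective _ hS).apply_symm_apply h
  rw [h2] at h1
  rw [← h1]
  exact (LinearEquiv.ofBijective _ hS').symm_apply_apply _

lemma twist_comm (T : H →ₗ[k] H) (T' : H' →ₗ[K] H')
    (hT : ∀ h : H, T' (ι h) = ι (T h)) (h : H) :
    twist K H' hS' T' (ι h) = ι (twist k H hS T h) := by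
  simp only [twist, LinearMap.comp_apply, hT,
    antipodeInv_comm hS hS' ι hmul hone hcounit hcomul]

lemma pow_comm (T : H →ₗ[k] H) (T' : H' →ₗ[K] H')
    (hT : ∀ h : H, T' (ι h) = ι (T h)) : ∀ (j : ℕ) (h : H), (T' ^ j) (ι h) = ι ((T ^ j) h) := by
  intro j
  induction j with
  | zero => intro h; simp
  | succ n ih =>
      intro h
      rw [pow_succ, pow_succ, Module.End.mul_apply, Module.End.mul_apply, hT, ih]

lemma convOne_comm (h : H) : convOne K H' (ι h) = ι (convOne k H h) := by
  simp only [convOne, LinearMap.comp_apply, Algebra.linearMap_apply, hcounit h]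
  rw [Algebra.algebraMap_eq_smul_one, algebraMap_smul,
    Algebra.algebraMap_eq_smul_one, map_smul, hone]

lemma conv_comm (f g : H →ₗ[k] H) (f' g' : H' →ₗ[K] H')
    (hf : ∀ h : H, f' (ι h) = ι (f h)) (hg : ∀ h : H, g' (ι h) = ι (g h)) (h : H) :
    conv K H' f' g' (ι h) = ι (conv k H f g h) := by
  simp only [conv, LinearMap.comp_apply]
  rw [hcomul h]
  induction Coalgebra.comul (R := k) h using TensorProduct.induction_on with
  | zero => simp
  | tmul x y => simp [hf, hg, hmul, LinearMap.mul'_apply]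
  | add t1 t2 ih1 ih2 => simp only [map_add, ih1, ih2]

lemma gamma_comm (T : H →ₗ[k] H) (T' : H' →ₗ[K] H')
    (hT : ∀ h : H, T' (ι h) = ι (T h)) :
    ∀ (m : ℕ) (h : H), gamma K H' T' m (ι h) = ι (gamma k H T m h) := by
  intro m
  induction m with
  | zero => exact fun h => convOne_comm hS hS' ι hmul hone hcounit hcomul h
  | succ n ih =>
      intro h
      exact conv_comm hS hS' ι hmul hone hcounit hcomul _ _ _ _ ih
        (pow_comm hS hS' ι hmul hone hcounit hcomul T T' hT n) h

end Comm
end TwistedExponent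

open TwistedExponent

/-- Let `H` be a Hopf algebra over a field `k` with bijective antipode, `τ` a
Hopf algebra automorphism of `H` of finite order `r`, and `K` a field extension of `k`.  Then
the twisted exponent of the base-changed Hopf algebra `H ⊗_k K` with respect to `τ ⊗ Id_K`
equals `exp_τ(H)`.  (The base change is encoded as a `K`-Hopf algebra `H'` together with a
`k`-linear multiplicative, counit- and comultiplication-preserving map `ι : H → H'` whose
`K`-linear extension `K ⊗[k] H → H'` is bijective, the automorphism `τ'` of `H'` being the
base change of `τ`, i.e. `τ' ∘ ι = ι ∘ τ`; both exponents may be infinite, equality meaning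
that the same positive integers `n` satisfy the defining condition `Γ_{nr} = ε·1`.) -/
theorem stmt10 {k K H H' : Type*} [Field k] [Field K] [Algebra k K]
    [Ring H] [HopfAlgebra k H] [Ring H'] [HopfAlgebra K H']
    [Module k H'] [IsScalarTower k K H']
    (hS : Function.Bijective (HopfAlgebra.antipode (R := k) (A := H)))
    (hS' : Function.Bijective (HopfAlgebra.antipode (R := K) (A := H')))
    (τ : H ≃ₐc[k] H) (r : ℕ) (hr : HasOrder H (⇑τ) r)
    (ι : H →ₗ[k] H')
    (hmul : ∀ x y : H, ι (x * y) = ι x * ι y) (hone : ι 1 = 1)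
    (hcounit : ∀ h : H, Coalgebra.counit (R := K) (ι h) =
      algebraMap k K (Coalgebra.counit (R := k) h))
    (hcomul : ∀ h : H, Coalgebra.comul (R := K) (ι h) =
      tensorIota (K := K) ι (Coalgebra.comul (R := k) h))
    (hbij : Function.Bijective (LinearMap.liftBaseChange K ι))
    (τ' : H' ≃ₐc[K] H') (hτ' : ∀ h : H, τ' (ι h) = ι (τ h)) :
    ∀ n : ℕ, 0 < n →
      (gamma k H (twist k H hS (τ : H →ₗ[k] H)) (n * r) = convOne k H ↔
        gamma K H' (twist K H' hS' (τ' : H' →ₗ[K] H')) (n * r) = convOne K H') := by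
  intro n hn
  have hτl : ∀ h : H, (τ' : H' →ₗ[K] H') (ι h) = ι ((τ : H →ₗ[k] H) h) := fun h => hτ' h
  have htw : ∀ h : H, twist K H' hS' (τ' : H' →ₗ[K] H') (ι h) =
      ι (twist k H hS (τ : H →ₗ[k] H) h) :=
    twist_comm hS hS' ι hmul hone hcounit hcomul _ _ hτl
  have hg : ∀ (m : ℕ) (h : H),
      gamma K H' (twist K H' hS' (τ' : H' →ₗ[K] H')) m (ι h) =
        ι (gamma k H (twist k H hS (τ : H →ₗ[k] H)) m h) :=
    gamma_comm hS hS' ι hmul hone hcounit hcomul _ _ htw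
  have hco : ∀ h : H, convOne K H' (ι h) = ι (convOne k H h) :=
    convOne_comm hS hS' ι hmul hone hcounit hcomul
  constructor
  · intro hH
    apply LinearMap.ext
    intro x
    obtain ⟨t, rfl⟩ := hbij.2 x
    induction t using TensorProduct.induction_on with
    | zero => simp
    | tmul c h =>
        rw [LinearMap.liftBaseChange_tmul, map_smul, map_smul, hg (n * r) h, hH, ← hco h]
    | add t1 t2 ih1 ih2 => rw [map_add, map_add, map_add, ih1, ih2]
  · intro hH'
    have hι : Function.Injective ι := by
      have hflat : Function.Injective ((Algebra.linearMap k K).rTensor H) :=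
        Module.Flat.rTensor_preserves_injective_linearMap (M := H)
          (Algebra.linearMap k K) (algebraMap k K).injective
      have h1 : Function.Injective (fun h : H => (1 : K) ⊗ₜ[k] h) := by
        have he : (fun h : H => (1 : K) ⊗ₜ[k] h) =
            (Algebra.linearMap k K).rTensor H ∘ (TensorProduct.lid k H).symm := by
          ext h; simp
        rw [he]
        exact hflat.comp (TensorProduct.lid k H).symm.injective
      have he2 : ⇑ι = ⇑(LinearMap.liftBaseChange K ι) ∘ (fun h : H => (1 : K) ⊗ₜ[k] h) := by
        ext h; simp
      rw [he2]
      exact hbij.1.comp h1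
    apply LinearMap.ext
    intro h
    apply hι
    rw [← hg (n * r) h, hH', hco h]
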